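/- arXiv:1910.13421 — 3 statements merged into one kernel-verified Lean document; each statement's English description precedes it below -/
import Mathlib

section
/- If a nonzero (not necessarily unital) subalgebra W of the matrix algebra Mat_d(ℝ) does not preserve any proper nontrivial linear subspace of ℝ^d (i.e. the only subspaces V ⊆ ℝ^d with w(V) ⊆ V for all w ∈ W are {0} and ℝ^d), then W contains the identity matrix. -/
/-- Core ring-theoretic lemma: if `R` is a ring with a simple module `M` that is
"finitely faithful" via the family `v`, then every two-sided-ideal-like subset `I`
admits the stated splitting of `1`. -/
theorem core0 {R M ι : Type*} [Ring R] [AddCommGroup M] [Module R M] [Finite ι] [DecidableEq ι]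
    [IsSimpleModule R M] (v : ι → M) (hv : ∀ r : R, (∀ i, r • v i = 0) → r = 0)
    (I : Set R) (hI0 : (0 : R) ∈ I) (hIadd : ∀ a b : R, a ∈ I → b ∈ I → a + b ∈ I)
    (hIleft : ∀ r a : R, a ∈ I → r * a ∈ I) (hIright : ∀ a b : R, a ∈ I → b ∈ I → a * b ∈ I) :
    ∃ e f : R, e ∈ I ∧ e + f = 1 ∧ ∀ a ∈ I, a * f = 0 := by
  classical
  haveI ssM : IsSemisimpleModule R M := by
    constructor
  have hsinj : ∀ i : ι, Function.Injective (LinearMap.single R (fun _ : ι => M) i) := by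
    intro i x y h
    simpa using congrFun h i
  have hpi : ∀ i : ι,
      IsSemisimpleModule R (LinearMap.range (LinearMap.single R (fun _ : ι => M) i)) :=
    fun i => IsSemisimpleModule.congr (LinearEquiv.ofInjective _ (hsinj i)).symm
  haveI sspi : IsSemisimpleModule R (ι → M) :=
    isSemisimpleModule_of_isSemisimpleModule_submodule' hpi
      (LinearMap.iSup_range_single R (fun _ : ι => M))
  let ψ : R →ₗ[R] (ι → M) :=
    { toFun := fun a => fun i => a • v i
      map_add' := by intro a b; funext i; simp [add_smul]
      map_smul' := by intro r a; funext i; simp [mul_smul] }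
  have hinj : Function.Injective ψ := by
    intro a b hab
    have h4 : a - b = 0 := by
      apply hv
      intro i
      have h3 : a • v i = b • v i := congrFun hab i
      rw [sub_smul, h3, sub_self]
    exact sub_eq_zero.mp h4
  haveI ssR : IsSemisimpleModule R R :=
    IsSemisimpleModule.congr (LinearEquiv.ofInjective ψ hinj)
  set Isub : Submodule R R :=
    { carrier := I
      add_mem' := fun ha hb => hIadd _ _ ha hb
      zero_mem' := hI0
      smul_mem' := fun r a ha => by simpa [smul_eq_mul] using hIleft r a ha } with hIsub
  obtain ⟨C, hC⟩ := exists_isCompl Isub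
  have h1top : (1 : R) ∈ Isub ⊔ C := by rw [hC.sup_eq_top]; trivial
  obtain ⟨e, he, f, hf, hef⟩ := Submodule.mem_sup.mp h1top
  refine ⟨e, f, he, hef, ?_⟩
  intro a ha
  have hae : a * e ∈ Isub := hIright _ _ ha he
  have haf1 : a * f ∈ Isub := by
    have hsum : a * e + a * f = a := by rw [← mul_add, hef, mul_one]
    have h5 : a * f = a - a * e := by
      calc a * f = (a * e + a * f) - a * e := by abel
      _ = a - a * e := by rw [hsum]
    rw [h5]
    exact Isub.sub_mem ha hae
  have haf2 : a * f ∈ C := by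
    rw [← smul_eq_mul]
    exact C.smul_mem a hf
  have h7 : a * f ∈ Isub ⊓ C := ⟨haf1, haf2⟩
  rwa [hC.inf_eq_bot, Submodule.mem_bot] at h7

set_option maxHeartbeats 1000000 in
set_option synthInstance.maxHeartbeats 400000 in
/-- The endomorphism-algebra version of the main theorem. -/
theorem aux0 {d : ℕ} (hd : 0 < d)
    (W' : Submodule ℝ (Module.End ℝ (Fin d → ℝ)))
    (hW' : W' ≠ ⊥)
    (hmul' : ∀ a ∈ W', ∀ b ∈ W', a * b ∈ W')
    (hirr' : ∀ V : Submodule ℝ (Fin d → ℝ),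
      (∀ w ∈ W', ∀ v ∈ V, w v ∈ V) → V = ⊥ ∨ V = ⊤) :
    (1 : Module.End ℝ (Fin d → ℝ)) ∈ W' := by
  classical
  haveI : Nonempty (Fin d) := ⟨⟨0, hd⟩⟩
  -- the unital algebra A = ℝ•1 + W'
  set Asub : Submodule ℝ (Module.End ℝ (Fin d → ℝ)) := (ℝ ∙ 1) ⊔ W' with hAsub
  have hA_one : (1 : Module.End ℝ (Fin d → ℝ)) ∈ Asub :=
    Submodule.mem_sup_left (Submodule.mem_span_singleton_self 1)
  have hW'A : W' ≤ Asub := le_sup_right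
  have mem_Asub : ∀ x ∈ Asub, ∃ c : ℝ, ∃ w ∈ W', x = c • 1 + w := by
    intro x hx
    obtain ⟨y, hy, z, hz, rfl⟩ := Submodule.mem_sup.mp hx
    obtain ⟨c, rfl⟩ := Submodule.mem_span_singleton.mp hy
    exact ⟨c, z, hz, rfl⟩
  have hA_mul : ∀ x y : Module.End ℝ (Fin d → ℝ),
      x ∈ Asub → y ∈ Asub → x * y ∈ Asub := by
    intro x y hx hy
    obtain ⟨c, w, hw, rfl⟩ := mem_Asub x hx
    obtain ⟨c', w', hw', rfl⟩ := mem_Asub y hy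
    have e : (c • 1 + w) * (c' • 1 + w')
        = c • (c' • 1 + w') + (c' • w + w * w') := by
      rw [add_mul, smul_mul_assoc, one_mul, mul_add, mul_smul_comm, mul_one]
    rw [e]
    exact add_mem (Asub.smul_mem _ hy)
      (hW'A (add_mem (W'.smul_mem _ hw) (hmul' _ hw _ hw')))
  set A : Subalgebra ℝ (Module.End ℝ (Fin d → ℝ)) := Asub.toSubalgebra hA_one hA_mul with hA
  -- (Fin d → ℝ) is a simple A-module
  have hbt : (⊥ : Submodule A (Fin d → ℝ)) ≠ ⊤ := by
    intro h
    obtain ⟨x, hx⟩ := exists_ne (0 : Fin d → ℝ)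
    apply hx
    have hx' : x ∈ (⊥ : Submodule A (Fin d → ℝ)) := h.symm ▸ Submodule.mem_top
    simpa using hx'
  haveI hsimple : IsSimpleModule A (Fin d → ℝ) := by
    haveI : Nontrivial (Submodule A (Fin d → ℝ)) := ⟨⊥, ⊤, hbt⟩
    refine (isSimpleModule_iff _ _).mpr ⟨fun p => ?_⟩
    set V : Submodule ℝ (Fin d → ℝ) :=
      { carrier := p
        add_mem' := fun ha hb => p.add_mem ha hb
        zero_mem' := p.zero_mem
        smul_mem' := by
          intro c v hv
          have h := p.smul_mem (⟨c • 1, Asub.smul_mem c hA_one⟩ : A) hv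
          have heq : ((⟨c • 1, Asub.smul_mem c hA_one⟩ : A) • v) = c • v := by
            show (c • (1 : Module.End ℝ (Fin d → ℝ))) v = c • v
            rw [LinearMap.smul_apply, Module.End.one_apply]
          rwa [heq] at h } with hV
    have hinv : ∀ w ∈ W', ∀ v ∈ V, w v ∈ V := by
      intro w hw v hv
      exact p.smul_mem (⟨w, hW'A hw⟩ : A) hv
    rcases hirr' V hinv with h | h
    · left
      rw [Submodule.eq_bot_iff] at h ⊢
      exact fun x hx => h x hx
    · right
      rw [Submodule.eq_top_iff']
      intro x
      have hx : x ∈ V := h ▸ Submodule.mem_top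
      exact hx
  -- faithfulness via the standard basis vectors
  have hv : ∀ a : A, (∀ i : Fin d, a • (Pi.single i 1 : Fin d → ℝ) = 0) → a = 0 := by
    intro a h
    apply Subtype.ext
    show (a : Module.End ℝ (Fin d → ℝ)) = 0
    apply LinearMap.pi_ext
    intro i x
    have h1 : (Pi.single i x : Fin d → ℝ) = x • (Pi.single i 1 : Fin d → ℝ) := by
      funext j
      by_cases hij : j = i <;> simp [Pi.single_apply, hij]
    have h2 : (a : Module.End ℝ (Fin d → ℝ)) (Pi.single i 1) = 0 := h i
    rw [h1, map_smul, h2]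
    simp
  -- the two-sided ideal corresponding to W'
  set I : Set A := {a : A | (a : Module.End ℝ (Fin d → ℝ)) ∈ W'} with hI
  have hI0 : (0 : A) ∈ I := W'.zero_mem
  have hIadd : ∀ a b : A, a ∈ I → b ∈ I → a + b ∈ I := fun a b ha hb => W'.add_mem ha hb
  have hIright : ∀ a b : A, a ∈ I → b ∈ I → a * b ∈ I := fun a b ha hb => hmul' _ ha _ hb
  have hIleft : ∀ r a : A, a ∈ I → r * a ∈ I := by
    intro r a ha
    show ((r * a : A) : Module.End ℝ (Fin d → ℝ)) ∈ W'
    obtain ⟨c, w, hw, hr⟩ := mem_Asub (r : Module.End ℝ (Fin d → ℝ)) r.2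
    have : ((r * a : A) : Module.End ℝ (Fin d → ℝ))
        = (r : Module.End ℝ (Fin d → ℝ)) * (a : Module.End ℝ (Fin d → ℝ)) := rfl
    rw [this, hr, add_mul, smul_mul_assoc, one_mul]
    exact W'.add_mem (W'.smul_mem _ ha) (hmul' _ hw _ ha)
  obtain ⟨e, f, he, hef, key⟩ :=
    core0 (R := A) (ι := Fin d) (fun i => (Pi.single i 1 : Fin d → ℝ)) hv I hI0 hIadd hIleft hIright
  -- transfer back
  have hef' : (e : Module.End ℝ (Fin d → ℝ)) + (f : Module.End ℝ (Fin d → ℝ)) = 1 := by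
    have := congrArg (Subtype.val) hef
    simpa using this
  have key' : ∀ w ∈ W', w * (f : Module.End ℝ (Fin d → ℝ)) = 0 := by
    intro w hw
    have h8 := key ⟨w, hW'A hw⟩ hw
    have h9 := congrArg (Subtype.val) h8
    simpa using h9
  -- range of f is W'-invariant
  set V2 : Submodule ℝ (Fin d → ℝ) := LinearMap.range (f : Module.End ℝ (Fin d → ℝ)) with hV2
  have hinv2 : ∀ w ∈ W', ∀ v ∈ V2, w v ∈ V2 := by
    rintro w hw v ⟨x, rfl⟩
    have heq : w ((f : Module.End ℝ (Fin d → ℝ)) x)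
        = (w * (f : Module.End ℝ (Fin d → ℝ))) x := rfl
    rw [heq, key' w hw]
    exact V2.zero_mem
  rcases hirr' V2 hinv2 with h | h
  · have hf0 : (f : Module.End ℝ (Fin d → ℝ)) = 0 := LinearMap.range_eq_bot.mp h
    have h1 : (1 : Module.End ℝ (Fin d → ℝ)) = (e : Module.End ℝ (Fin d → ℝ)) := by
      rw [← hef', hf0, add_zero]
    exact h1 ▸ he
  · exfalso
    have hsurj : Function.Surjective (f : Module.End ℝ (Fin d → ℝ)) :=
      LinearMap.range_eq_top.mp h
    obtain ⟨w, hw, hw0⟩ := (Submodule.ne_bot_iff W').mp hW'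
    apply hw0
    apply LinearMap.ext
    intro m
    obtain ⟨x, rfl⟩ := hsurj m
    have heq : w ((f : Module.End ℝ (Fin d → ℝ)) x)
        = (w * (f : Module.End ℝ (Fin d → ℝ))) x := rfl
    rw [heq, key' w hw]
    simp

/-- If a nonzero (not necessarily unital) subalgebra `W` of `Mat_d(ℝ)` preserves no
proper nontrivial subspace of `ℝ^d`, then `W` contains the identity matrix. -/
theorem stmt0 {d : ℕ} (W : Submodule ℝ (Matrix (Fin d) (Fin d) ℝ))
    (hW : W ≠ ⊥)
    (hmul : ∀ a ∈ W, ∀ b ∈ W, a * b ∈ W)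
    (hirr : ∀ V : Submodule ℝ (Fin d → ℝ),
      (∀ w ∈ W, ∀ v ∈ V, Matrix.mulVec w v ∈ V) → V = ⊥ ∨ V = ⊤) :
    (1 : Matrix (Fin d) (Fin d) ℝ) ∈ W := by
  classical
  rcases Nat.eq_zero_or_pos d with hd | hd
  · subst hd
    have h1 : (1 : Matrix (Fin 0) (Fin 0) ℝ) = 0 := by
      ext i j
      exact i.elim0
    rw [h1]
    exact W.zero_mem
  set φ : Matrix (Fin d) (Fin d) ℝ ≃ₐ[ℝ] Module.End ℝ (Fin d → ℝ) :=
    Matrix.toLinAlgEquiv' with hφ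
  set W' : Submodule ℝ (Module.End ℝ (Fin d → ℝ)) := W.map φ.toLinearMap with hW'def
  have hW'ne : W' ≠ ⊥ := by
    obtain ⟨w, hw, hw0⟩ := (Submodule.ne_bot_iff W).mp hW
    rw [Submodule.ne_bot_iff]
    exact ⟨φ w, ⟨w, hw, rfl⟩, fun h0 => hw0 (φ.injective (by rw [h0, map_zero]))⟩
  have hmul' : ∀ a ∈ W', ∀ b ∈ W', a * b ∈ W' := by
    rintro a ⟨a₀, ha₀, rfl⟩ b ⟨b₀, hb₀, rfl⟩
    exact ⟨a₀ * b₀, hmul _ ha₀ _ hb₀, map_mul φ _ _⟩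
  have hirr' : ∀ V : Submodule ℝ (Fin d → ℝ),
      (∀ w ∈ W', ∀ v ∈ V, w v ∈ V) → V = ⊥ ∨ V = ⊤ := by
    intro V hV
    apply hirr V
    intro w hw v hv
    exact hV (φ w) ⟨w, hw, rfl⟩ v hv
  have h1 : (1 : Module.End ℝ (Fin d → ℝ)) ∈ W' := aux0 hd W' hW'ne hmul' hirr'
  obtain ⟨m, hm, hm1⟩ := h1
  have hm1' : φ m = 1 := hm1
  have hm' : m = 1 := φ.injective (hm1'.trans (map_one φ).symm)
  rwa [hm'] at hm
end

section
/- Let E be a finite-dimensional real associative algebra, let ν be a Borel probability measure on E, l ≥ 1 an integer, and let μ = ν^{⊞l} ⊟ ν^{⊞l} (the l-fold additive convolution of ν minus an independent copy of itself). Then for every integer m ≥ 1 and every ξ ∈ E*, the Fourier coefficient of the m-fold multiplicative convolution μ^{*m} at ξ is a nonnegative real number, and |\widehat{ν^{*m}}(ξ)|^{(2l)^m} ≤ \widehat{μ^{*m}}(ξ). -/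
open MeasureTheory

variable {E : Type} [NormedRing E] [NormedAlgebra ℝ E] [FiniteDimensional ℝ E]
  [MeasurableSpace E] [BorelSpace E]

/-- Multiplicative convolution of two measures on the algebra `E`. -/
noncomputable def mulConv (μ ν : Measure E) : Measure E :=
  (μ.prod ν).map fun p => p.1 * p.2

/-- Additive convolution of two measures on `E`. -/
noncomputable def addConv (μ ν : Measure E) : Measure E :=
  (μ.prod ν).map fun p => p.1 + p.2

/-- Convolution by difference: pushforward of `μ ⊗ ν` under `(x, y) ↦ x - y`. -/
noncomputable def subConv (μ ν : Measure E) : Measure E :=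
  (μ.prod ν).map fun p => p.1 - p.2

/-- `m`-fold multiplicative convolution power (`mulConvPow μ m = μ^{*m}` for `m ≥ 1`). -/
noncomputable def mulConvPow (μ : Measure E) : ℕ → Measure E
  | 0 => Measure.dirac 1
  | n + 1 => mulConv μ (mulConvPow μ n)

/-- `l`-fold additive convolution power (`addConvPow ν l = ν^{⊞l}` for `l ≥ 1`). -/
noncomputable def addConvPow (ν : Measure E) : ℕ → Measure E
  | 0 => Measure.dirac 0
  | n + 1 => addConv ν (addConvPow ν n)

/-- The Fourier transform of a finite measure on `E` at a linear functional `ξ ∈ E*`. -/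
noncomputable def fourierTransform (μ : Measure E) (ξ : E →L[ℝ] ℝ) : ℂ :=
  ∫ x, Complex.exp (2 * Real.pi * Complex.I * (ξ x : ℂ)) ∂μ

open scoped ComplexConjugate
set_option linter.unusedSectionVars false

/-! ### Auxiliary development -/

namespace Stmt3Aux

/-- The character `t ↦ e^{2πit}`. -/
noncomputable def e (t : ℝ) : ℂ := Complex.exp (2 * Real.pi * Complex.I * (t : ℂ))

lemma fourier_eq (μ : Measure E) (ξ : E →L[ℝ] ℝ) :
    fourierTransform μ ξ = ∫ x, e (ξ x) ∂μ := rfl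

lemma norm_e (t : ℝ) : ‖e t‖ = 1 := by
  simp only [e, Complex.norm_exp]
  have : (2 * Real.pi * Complex.I * (t : ℂ)).re = 0 := by simp
  rw [this, Real.exp_zero]

lemma e_add (s t : ℝ) : e (s + t) = e s * e t := by
  simp only [e, ← Complex.exp_add]
  congr 1
  push_cast
  ring

lemma conj_e (t : ℝ) : conj (e t) = e (-t) := by
  simp only [e, ← Complex.exp_conj]
  congr 1
  simp only [map_mul, Complex.conj_I, Complex.conj_ofReal, map_ofNat]
  push_cast
  ring

lemma e_sub (s t : ℝ) : e (s - t) = e s * conj (e t) := by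
  rw [conj_e, sub_eq_add_neg, e_add]

lemma e_zero : e 0 = 1 := by simp [e]

@[fun_prop] lemma continuous_e : Continuous e := by
  unfold e; fun_prop

lemma integrable_e_comp {α : Type*} [MeasurableSpace α] (ρ : Measure α) [IsFiniteMeasure ρ]
    {f : α → ℝ} (hf : AEStronglyMeasurable f ρ) :
    Integrable (fun x => e (f x)) ρ := by
  refine Integrable.mono' (integrable_const 1) (continuous_e.comp_aestronglyMeasurable hf) ?_
  filter_upwards with x
  rw [norm_e]

/-- `‖μ̂(ξ)‖ ≤ 1` for a probability measure. -/
lemma norm_fourier_le_one (ρ : Measure E) [IsProbabilityMeasure ρ] (ξ : E →L[ℝ] ℝ) :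
    ‖fourierTransform ρ ξ‖ ≤ 1 := by
  rw [fourier_eq]
  calc ‖∫ x, e (ξ x) ∂ρ‖ ≤ ∫ x, ‖e (ξ x)‖ ∂ρ := norm_integral_le_integral_norm _
  _ = 1 := by simp only [norm_e]; simp

lemma measurable_mul2 : Measurable fun p : E × E => p.1 * p.2 := measurable_fst.mul measurable_snd

instance isProb_mulConv (ρ σ : Measure E) [IsProbabilityMeasure ρ] [IsProbabilityMeasure σ] :
    IsProbabilityMeasure (mulConv ρ σ) :=
  Measure.isProbabilityMeasure_map measurable_mul2.aemeasurable

instance isProb_addConv (ρ σ : Measure E) [IsProbabilityMeasure ρ] [IsProbabilityMeasure σ] :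
    IsProbabilityMeasure (addConv ρ σ) :=
  Measure.isProbabilityMeasure_map (measurable_fst.add measurable_snd : Measurable fun p : E × E => p.1 + p.2).aemeasurable

instance isProb_subConv (ρ σ : Measure E) [IsProbabilityMeasure ρ] [IsProbabilityMeasure σ] :
    IsProbabilityMeasure (subConv ρ σ) :=
  Measure.isProbabilityMeasure_map (measurable_fst.sub measurable_snd : Measurable fun p : E × E => p.1 - p.2).aemeasurable

instance isProb_mulConvPow (ρ : Measure E) [IsProbabilityMeasure ρ] (n : ℕ) :
    IsProbabilityMeasure (mulConvPow ρ n) := by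
  induction n with
  | zero => exact ⟨by simp [mulConvPow]⟩
  | succ n ih => exact isProb_mulConv _ _

instance isProb_addConvPow (ρ : Measure E) [IsProbabilityMeasure ρ] (n : ℕ) :
    IsProbabilityMeasure (addConvPow ρ n) := by
  induction n with
  | zero => exact ⟨by simp [addConvPow]⟩
  | succ n ih => exact isProb_addConv _ _

/-- Right multiplication composed with `ξ` : `(R ξ y) x = ξ (x * y)`. -/
noncomputable def R (ξ : E →L[ℝ] ℝ) (y : E) : E →L[ℝ] ℝ :=
  ξ.comp ((ContinuousLinearMap.mul ℝ E).flip y)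

@[simp] lemma R_apply (ξ : E →L[ℝ] ℝ) (y x : E) : R ξ y x = ξ (x * y) := rfl

/-- Left multiplication composed with `ξ` : `(L ξ x) y = ξ (x * y)`. -/
noncomputable def L (ξ : E →L[ℝ] ℝ) (x : E) : E →L[ℝ] ℝ :=
  ξ.comp ((ContinuousLinearMap.mul ℝ E) x)

@[simp] lemma L_apply (ξ : E →L[ℝ] ℝ) (x y : E) : L ξ x y = ξ (x * y) := rfl

lemma integrable_e_mul (ρ σ : Measure E) [IsProbabilityMeasure ρ] [IsProbabilityMeasure σ]
    (ξ : E →L[ℝ] ℝ) :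
    Integrable (fun p : E × E => e (ξ (p.1 * p.2))) (ρ.prod σ) := by
  apply integrable_e_comp
  exact Continuous.aestronglyMeasurable (by fun_prop)

/-- Fubini, integrating out the first coordinate. -/
lemma fourier_mulConv_right (ρ σ : Measure E) [IsProbabilityMeasure ρ] [IsProbabilityMeasure σ]
    (ξ : E →L[ℝ] ℝ) :
    fourierTransform (mulConv ρ σ) ξ = ∫ y, fourierTransform ρ (R ξ y) ∂σ := by
  rw [fourier_eq, mulConv,
    integral_map measurable_mul2.aemeasurable
      (Continuous.aestronglyMeasurable (by fun_prop : Continuous fun x : E => e (ξ x))),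
    integral_prod_symm _ (integrable_e_mul ρ σ ξ)]
  simp [fourier_eq]

/-- Fubini, integrating out the second coordinate. -/
lemma fourier_mulConv_left (ρ σ : Measure E) [IsProbabilityMeasure ρ] [IsProbabilityMeasure σ]
    (ξ : E →L[ℝ] ℝ) :
    fourierTransform (mulConv ρ σ) ξ = ∫ x, fourierTransform σ (L ξ x) ∂ρ := by
  rw [fourier_eq, mulConv,
    integral_map measurable_mul2.aemeasurable
      (Continuous.aestronglyMeasurable (by fun_prop : Continuous fun x : E => e (ξ x))),
    integral_prod _ (integrable_e_mul ρ σ ξ)]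
  simp [fourier_eq]

lemma fourier_addConv (ρ σ : Measure E) [IsProbabilityMeasure ρ] [IsProbabilityMeasure σ]
    (η : E →L[ℝ] ℝ) :
    fourierTransform (addConv ρ σ) η = fourierTransform ρ η * fourierTransform σ η := by
  rw [fourier_eq, addConv,
    integral_map (by fun_prop : Measurable fun p : E × E => p.1 + p.2).aemeasurable
      (Continuous.aestronglyMeasurable (by fun_prop : Continuous fun x : E => e (η x)))]
  have hint : Integrable (fun p : E × E => e (η (p.1 + p.2))) (ρ.prod σ) := by
    apply integrable_e_comp
    exact Continuous.aestronglyMeasurable (by fun_prop)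
  rw [integral_prod _ hint]
  simp only [map_add, e_add]
  rw [fourier_eq, fourier_eq]
  rw [← integral_mul_const]
  congr 1; ext x
  rw [← integral_const_mul]

lemma fourier_subConv (ρ σ : Measure E) [IsProbabilityMeasure ρ] [IsProbabilityMeasure σ]
    (η : E →L[ℝ] ℝ) :
    fourierTransform (subConv ρ σ) η
      = fourierTransform ρ η * conj (fourierTransform σ η) := by
  rw [fourier_eq, subConv,
    integral_map (by fun_prop : Measurable fun p : E × E => p.1 - p.2).aemeasurable
      (Continuous.aestronglyMeasurable (by fun_prop : Continuous fun x : E => e (η x)))]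
  have hint : Integrable (fun p : E × E => e (η (p.1 - p.2))) (ρ.prod σ) := by
    apply integrable_e_comp
    exact Continuous.aestronglyMeasurable (by fun_prop)
  rw [integral_prod _ hint]
  simp only [map_sub, e_sub]
  rw [fourier_eq, fourier_eq, ← integral_conj, ← integral_mul_const]
  congr 1; ext x
  rw [← integral_const_mul]

lemma fourier_addConvPow (ν : Measure E) [IsProbabilityMeasure ν] (n : ℕ) (η : E →L[ℝ] ℝ) :
    fourierTransform (addConvPow ν n) η = (fourierTransform ν η) ^ n := by
  induction n with
  | zero =>
    show fourierTransform (Measure.dirac 0) η = 1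
    rw [fourier_eq, integral_dirac]
    simp [e_zero]
  | succ n ih =>
    show fourierTransform (addConv ν (addConvPow ν n)) η = _
    rw [fourier_addConv, ih, pow_succ]
    ring


lemma fourier_mu (ν : Measure E) [IsProbabilityMeasure ν] (l : ℕ) (η : E →L[ℝ] ℝ) :
    fourierTransform (subConv (addConvPow ν l) (addConvPow ν l)) η
      = ((‖fourierTransform ν η‖ ^ (2 * l) : ℝ) : ℂ) := by
  rw [fourier_subConv, fourier_addConvPow, Complex.mul_conj,
    Complex.normSq_eq_norm_sq, norm_pow, ← pow_mul, mul_comm l 2]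

lemma sm_fourier_R (σ : Measure E) [SFinite σ] (ξ : E →L[ℝ] ℝ) :
    StronglyMeasurable fun y => fourierTransform σ (R ξ y) := by
  have h : (fun y => fourierTransform σ (R ξ y)) = fun y => ∫ x, e (ξ (x * y)) ∂σ := by
    funext y; rw [fourier_eq]; simp
  rw [h]
  exact (Continuous.stronglyMeasurable
    (by fun_prop : Continuous fun p : E × E => e (ξ (p.2 * p.1)))).integral_prod_right'

lemma sm_fourier_L (σ : Measure E) [SFinite σ] (ξ : E →L[ℝ] ℝ) :
    StronglyMeasurable fun x => fourierTransform σ (L ξ x) := by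
  have h : (fun x => fourierTransform σ (L ξ x)) = fun x => ∫ y, e (ξ (x * y)) ∂σ := by
    funext x; rw [fourier_eq]; simp
  rw [h]
  exact (Continuous.stronglyMeasurable
    (by fun_prop : Continuous fun p : E × E => e (ξ (p.1 * p.2)))).integral_prod_right'

/-- Master formula for the Fourier transform of `μ * P`. -/
lemma fourier_mulConv_mu (ν : Measure E) [IsProbabilityMeasure ν] (l : ℕ)
    (P : Measure E) [IsProbabilityMeasure P] (ξ : E →L[ℝ] ℝ) :
    fourierTransform (mulConv (subConv (addConvPow ν l) (addConvPow ν l)) P) ξ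
      = ((∫ y, ‖fourierTransform ν (R ξ y)‖ ^ (2 * l) ∂P : ℝ) : ℂ) := by
  rw [fourier_mulConv_right]
  have h : (fun y => fourierTransform (subConv (addConvPow ν l) (addConvPow ν l)) (R ξ y))
      = fun y => ((‖fourierTransform ν (R ξ y)‖ ^ (2 * l) : ℝ) : ℂ) := by
    funext y; exact fourier_mu ν l (R ξ y)
  rw [h]
  exact integral_ofReal

/-- Jensen's inequality for powers on a probability space. -/
lemma pow_integral_le {α : Type*} [MeasurableSpace α] (P : Measure α) [IsProbabilityMeasure P]
    {f : α → ℝ} (hsm : AEStronglyMeasurable f P) (h0 : ∀ x, 0 ≤ f x) (h1 : ∀ x, f x ≤ 1)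
    (k : ℕ) : (∫ x, f x ∂P) ^ k ≤ ∫ x, f x ^ k ∂P := by
  have hfi : Integrable f P := by
    refine Integrable.mono' (integrable_const 1) hsm (ae_of_all _ fun x => ?_)
    rw [Real.norm_eq_abs, abs_of_nonneg (h0 x)]; exact h1 x
  have hk1 : ∀ x, f x ^ k ≤ 1 := fun x => le_trans (pow_le_pow_left₀ (h0 x) (h1 x) k) (le_of_eq (one_pow k))
  have hgi : Integrable (fun x => f x ^ k) P := by
    refine Integrable.mono' (integrable_const 1) (hsm.pow k) (ae_of_all _ fun x => ?_)
    rw [Real.norm_eq_abs, abs_of_nonneg (pow_nonneg (h0 x) k)]; exact hk1 x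
  have H := (convexOn_pow k).map_average_le ((continuous_pow k).continuousOn) isClosed_Ici
    (ae_of_all _ fun x => h0 x) hfi hgi
  rwa [average_eq_integral, average_eq_integral] at H


lemma R_one (ξ : E →L[ℝ] ℝ) : R ξ 1 = ξ := by
  ext x; simp

set_option maxHeartbeats 1000000 in
/-- The key inductive inequality. -/
lemma key (ν : Measure E) [IsProbabilityMeasure ν] (l : ℕ) (m : ℕ) (hm : 1 ≤ m) :
    ∀ ξ : E →L[ℝ] ℝ,
      ‖fourierTransform (mulConvPow ν m) ξ‖ ^ ((2 * l) ^ m)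
        ≤ (fourierTransform (mulConvPow (subConv (addConvPow ν l) (addConvPow ν l)) m) ξ).re := by
  set M : Measure E := subConv (addConvPow ν l) (addConvPow ν l) with hM
  induction m, hm using Nat.le_induction with
  | base =>
    intro ξ
    have h1 : fourierTransform (mulConvPow ν 1) ξ = fourierTransform ν ξ := by
      simp only [mulConvPow]
      rw [fourier_mulConv_right, integral_dirac, R_one]
    have h2 : fourierTransform (mulConvPow M 1) ξ
        = ((‖fourierTransform ν ξ‖ ^ (2 * l) : ℝ) : ℂ) := by
      simp only [mulConvPow]
      rw [hM, fourier_mulConv_mu, integral_dirac, R_one]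
    rw [h1, h2, Complex.ofReal_re, pow_one]
  | succ m hm1 ih =>
    intro ξ
    obtain ⟨k, rfl⟩ : ∃ k, m = k + 1 := ⟨m - 1, by omega⟩
    set Q : Measure E := mulConvPow ν (k + 1) with hQ
    set P : Measure E := mulConvPow M (k + 1) with hP
    haveI : IsProbabilityMeasure Q := isProb_mulConvPow ν (k + 1)
    haveI : IsProbabilityMeasure P := isProb_mulConvPow M (k + 1)
    -- bounds for g
    set g : E → ℝ := fun x => ‖fourierTransform Q (L ξ x)‖ with hg
    have hgsm : AEStronglyMeasurable g ν := (sm_fourier_L Q ξ).norm.aestronglyMeasurable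
    have hg0 : ∀ x, 0 ≤ g x := fun x => norm_nonneg _
    have hg1 : ∀ x, g x ≤ 1 := fun x => norm_fourier_le_one Q _
    -- bounds for h
    set h : E → ℝ := fun x => (fourierTransform P (L ξ x)).re with hh
    have hhsm : AEStronglyMeasurable h ν := (Complex.continuous_re.comp_stronglyMeasurable (sm_fourier_L P ξ)).aestronglyMeasurable
    have hP_formula : ∀ η : E →L[ℝ] ℝ, fourierTransform P η
        = ((∫ y, ‖fourierTransform ν (R η y)‖ ^ (2 * l) ∂(mulConvPow M k) : ℝ) : ℂ) := by
      intro η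
      have : P = mulConv M (mulConvPow M k) := by rw [hP]; rfl
      rw [this, hM]
      exact fourier_mulConv_mu ν l (mulConvPow M k) η
    have hh0 : ∀ x, 0 ≤ h x := by
      intro x
      rw [hh]
      simp only [hP_formula (L ξ x), Complex.ofReal_re]
      exact integral_nonneg fun y => by positivity
    have hh1 : ∀ x, h x ≤ 1 := by
      intro x
      refine le_trans (Complex.re_le_norm _) ?_
      exact norm_fourier_le_one P _
    -- integrability
    have hgi : ∀ j : ℕ, Integrable (fun x => g x ^ j) ν := by
      intro j
      refine Integrable.mono' (integrable_const 1) (hgsm.pow j) (ae_of_all _ fun x => ?_)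
      rw [Real.norm_eq_abs, abs_of_nonneg (pow_nonneg (hg0 x) j)]
      exact le_trans (pow_le_pow_left₀ (hg0 x) (hg1 x) j) (le_of_eq (one_pow j))
    have hhi : Integrable h ν := by
      refine Integrable.mono' (integrable_const 1) hhsm (ae_of_all _ fun x => ?_)
      rw [Real.norm_eq_abs, abs_of_nonneg (hh0 x)]
      exact hh1 x
    have hFi : Integrable (fun x => fourierTransform P (L ξ x)) ν := by
      refine Integrable.mono' (integrable_const 1) (sm_fourier_L P ξ).aestronglyMeasurable
        (ae_of_all _ fun x => norm_fourier_le_one P _)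
    -- the function φ on P
    set φ : E → ℝ := fun y => ‖fourierTransform ν (R ξ y)‖ with hφ
    have hφsm : AEStronglyMeasurable φ P := (sm_fourier_R ν ξ).norm.aestronglyMeasurable
    have hφ0 : ∀ y, 0 ≤ φ y := fun y => norm_nonneg _
    have hφ1 : ∀ y, φ y ≤ 1 := fun y => norm_fourier_le_one ν _
    -- step (i): norm bound
    have hnQ : fourierTransform (mulConvPow ν (k + 1 + 1)) ξ = ∫ x, fourierTransform Q (L ξ x) ∂ν := by
      show fourierTransform (mulConv ν Q) ξ = _
      exact fourier_mulConv_left ν Q ξ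
    have hi : ‖fourierTransform (mulConvPow ν (k + 1 + 1)) ξ‖ ≤ ∫ x, g x ∂ν := by
      rw [hnQ]
      exact norm_integral_le_integral_norm _
    have hgint0 : 0 ≤ ∫ x, g x ∂ν := integral_nonneg hg0
    -- step (ii): Jensen + induction hypothesis
    have hii : (∫ x, g x ∂ν) ^ ((2 * l) ^ (k + 1)) ≤ ∫ x, h x ∂ν := by
      refine le_trans (pow_integral_le ν hgsm hg0 hg1 _) ?_
      refine integral_mono (hgi _) hhi fun x => ?_
      exact ih (L ξ x)
    have hhint0 : 0 ≤ ∫ x, h x ∂ν := integral_nonneg hh0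
    -- step (iii)
    have hiii : ∫ x, h x ∂ν ≤ ∫ y, φ y ∂P := by
      have e1 : ∫ x, h x ∂ν = (fourierTransform (mulConv ν P) ξ).re := by
        have e0 := Complex.reCLM.integral_comp_comm hFi
        simp only [Complex.reCLM_apply] at e0
        rw [hh, e0, fourier_mulConv_left]
      have e2 : ‖fourierTransform (mulConv ν P) ξ‖ ≤ ∫ y, φ y ∂P := by
        rw [fourier_mulConv_right]
        exact norm_integral_le_integral_norm _
      rw [e1]
      exact le_trans (Complex.re_le_norm _) e2
    -- step (iv): Jensen on P and the master formula
    have hiv : (∫ y, φ y ∂P) ^ (2 * l)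
        ≤ (fourierTransform (mulConvPow M (k + 1 + 1)) ξ).re := by
      refine le_trans (pow_integral_le P hφsm hφ0 hφ1 _) ?_
      have : fourierTransform (mulConvPow M (k + 1 + 1)) ξ
          = ((∫ y, φ y ^ (2 * l) ∂P : ℝ) : ℂ) := by
        show fourierTransform (mulConv M P) ξ = _
        rw [hM]
        exact fourier_mulConv_mu ν l P ξ
      rw [this, Complex.ofReal_re]
    -- assemble
    calc ‖fourierTransform (mulConvPow ν (k + 1 + 1)) ξ‖ ^ ((2 * l) ^ (k + 1 + 1))
        ≤ (∫ x, g x ∂ν) ^ ((2 * l) ^ (k + 1 + 1)) :=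
          pow_le_pow_left₀ (norm_nonneg _) hi _
      _ = ((∫ x, g x ∂ν) ^ ((2 * l) ^ (k + 1))) ^ (2 * l) := by
          rw [← pow_mul, pow_succ]
      _ ≤ (∫ x, h x ∂ν) ^ (2 * l) :=
          pow_le_pow_left₀ (pow_nonneg hgint0 _) hii _
      _ ≤ (∫ y, φ y ∂P) ^ (2 * l) :=
          pow_le_pow_left₀ hhint0 hiii _
      _ ≤ (fourierTransform (mulConvPow M (k + 1 + 1)) ξ).re := hiv

end Stmt3Aux

/-- Lemma on comparison of Fourier coefficients: with `μ = ν^{⊞l} ⊟ ν^{⊞l}`, the Fourier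
coefficient of `μ^{*m}` is a nonnegative real number and dominates
`|\widehat{ν^{*m}}(ξ)|^{(2l)^m}`. -/
theorem stmt3 (ν : Measure E) [IsProbabilityMeasure ν] (l : ℕ) (hl : 1 ≤ l)
    (μ : Measure E) (hμ : μ = subConv (addConvPow ν l) (addConvPow ν l))
    (m : ℕ) (hm : 1 ≤ m) (ξ : E →L[ℝ] ℝ) :
    (fourierTransform (mulConvPow μ m) ξ).im = 0 ∧
    0 ≤ (fourierTransform (mulConvPow μ m) ξ).re ∧
    ‖fourierTransform (mulConvPow ν m) ξ‖ ^ ((2 * l) ^ m) ≤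
      (fourierTransform (mulConvPow μ m) ξ).re := by
  subst hμ
  obtain ⟨n, rfl⟩ : ∃ n, m = n + 1 := ⟨m - 1, by omega⟩
  haveI : IsProbabilityMeasure
      (mulConvPow (subConv (addConvPow ν l) (addConvPow ν l)) n) :=
    Stmt3Aux.isProb_mulConvPow _ n
  have hB : fourierTransform
        (mulConvPow (subConv (addConvPow ν l) (addConvPow ν l)) (n + 1)) ξ
      = ((∫ y, ‖fourierTransform ν (Stmt3Aux.R ξ y)‖ ^ (2 * l)
            ∂(mulConvPow (subConv (addConvPow ν l) (addConvPow ν l)) n) : ℝ) : ℂ) := by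
    show fourierTransform (mulConv _ _) ξ = _
    exact Stmt3Aux.fourier_mulConv_mu ν l _ ξ
  refine ⟨?_, ?_, ?_⟩
  · rw [hB]; exact Complex.ofReal_im _
  · rw [hB, Complex.ofReal_re]
    exact integral_nonneg fun y => by positivity
  · exact Stmt3Aux.key ν l (n + 1) (by omega) ξ
end

section
/- Let E be a finite-dimensional real simple algebra and let f: Grass(k, E) → ℝ be defined on the Grassmannian of k-dimensional subspaces of E (0 < k < dim E) by f(W) = ∫∫_{B_E(0,1) × B_W(0,1)} (d(xw, W) + d(wx, W)) dx dw. Then f never vanishes; in particular f has a positive minimum on the Grassmannian. -/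
open MeasureTheory Metric Pointwise
set_option maxHeartbeats 1000000

lemma avg_seminorm {V : Type*} [NormedAddCommGroup V] [NormedSpace ℝ V]
    [MeasurableSpace V] [BorelSpace V] [FiniteDimensional ℝ V]
    (ν : Measure V) [ν.IsAddHaarMeasure]
    (g : V → ℝ) (hc : Continuous g) (h0 : ∀ v, 0 ≤ g v)
    (hadd : ∀ a b, g (a + b) ≤ g a + g b)
    (hsm : ∀ (r : ℝ) (v : V), g (r • v) = |r| * g v)
    (w0 : V) (hw0 : w0 ∈ closedBall (0 : V) 1) :
    g w0 * (ν (closedBall 0 1)).toReal / 2 ^ (Module.finrank ℝ V + 2)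
      ≤ ∫ w in closedBall (0 : V) 1, g w ∂ν := by
  set d := Module.finrank ℝ V with hd
  set B : Set V := closedBall 0 1 with hB
  have hBc : IsCompact B := isCompact_closedBall _ _
  have hInt : IntegrableOn g B ν := hc.continuousOn.integrableOn_compact hBc
  set c : V := (2⁻¹ : ℝ) • w0 with hc'
  have hcnorm : ‖c‖ ≤ 2⁻¹ := by
    rw [hc', norm_smul]
    simp only [norm_inv, Real.norm_ofNat]
    rw [mem_closedBall, dist_zero_right] at hw0
    nlinarith
  set B' : Set V := closedBall c 2⁻¹ with hB'
  have hsub : B' ⊆ B := by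
    intro y hy
    rw [hB', mem_closedBall] at hy
    rw [hB, mem_closedBall, dist_zero_right]
    calc ‖y‖ = ‖(y - c) + c‖ := by rw [sub_add_cancel]
    _ ≤ ‖y - c‖ + ‖c‖ := norm_add_le _ _
    _ ≤ 2⁻¹ + 2⁻¹ := by
        refine add_le_add ?_ hcnorm
        rw [← dist_eq_norm]; exact hy
    _ = 1 := by norm_num
  set I : ℝ := ∫ w in B, g w ∂ν with hI
  have hI0 : 0 ≤ I := setIntegral_nonneg measurableSet_closedBall fun w _ => h0 w
  have hVfin : ν B ≠ ⊤ := hBc.measure_lt_top.ne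
  set V0 : ℝ := (ν B).toReal with hV0
  have step1 : ∫ w in B', g w ∂ν ≤ I := by
    refine setIntegral_mono_set hInt ?_ (HasSubset.Subset.eventuallyLE hsub)
    filter_upwards with w using h0 w
  have h2d : (0:ℝ) < 2 ^ d := by positivity
  -- change of variables
  have step2 : ∫ w in B, g (c + (2⁻¹:ℝ) • w) ∂ν = (2:ℝ) ^ d * ∫ y in B', g y ∂ν := by
    have h1 := Measure.setIntegral_comp_smul_of_pos ν (fun z => g (c + z)) B
      (R := (2:ℝ)⁻¹) (by norm_num)
    have h2 : ((2:ℝ)⁻¹) • B = closedBall (0:V) 2⁻¹ := by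
      rw [hB, _root_.smul_closedBall _ _ zero_le_one]
      norm_num
    have h3 : ∫ z in closedBall (0:V) 2⁻¹, g (c + z) ∂ν = ∫ y in B', g y ∂ν := by
      have hpre : (fun z => c + z) ⁻¹' B' = closedBall (0:V) 2⁻¹ := by
        ext z
        simp [hB', mem_closedBall, dist_eq_norm]
      rw [← hpre]
      exact (measurePreserving_add_left ν c).setIntegral_preimage_emb
        (Homeomorph.addLeft c).measurableEmbedding g B'
    rw [h2, h3] at h1
    rw [h1, inv_pow, inv_inv, smul_eq_mul]
  have step3 : ∀ w ∈ B, (g w0 - g w)/2 ≤ g (c + (2⁻¹:ℝ) • w) := by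
    intro w _
    have hrepr : w0 = (2:ℝ) • (c + (2⁻¹:ℝ) • w) + (-1 : ℝ) • w := by
      rw [hc']; module
    have : g w0 ≤ 2 * g (c + (2⁻¹:ℝ) • w) + g w := by
      calc g w0 = g ((2:ℝ) • (c + (2⁻¹:ℝ) • w) + (-1 : ℝ) • w) := by rw [← hrepr]
      _ ≤ g ((2:ℝ) • (c + (2⁻¹:ℝ) • w)) + g ((-1 : ℝ) • w) := hadd _ _
      _ = 2 * g (c + (2⁻¹:ℝ) • w) + g w := by rw [hsm, hsm]; norm_num
    linarith
  have hIntT : IntegrableOn (fun w => g (c + (2⁻¹:ℝ) • w)) B ν := by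
    have : Continuous fun w : V => g (c + (2⁻¹:ℝ) • w) :=
      hc.comp (continuous_const.add (continuous_id.const_smul _))
    exact this.continuousOn.integrableOn_compact hBc
  have hIntL : IntegrableOn (fun w => (g w0 - g w)/2) B ν := by
    exact (((integrableOn_const hBc.measure_lt_top.ne).sub hInt).div_const 2)
  have step4 : ∫ w in B, (g w0 - g w)/2 ∂ν ≤ ∫ w in B, g (c + (2⁻¹:ℝ) • w) ∂ν :=
    setIntegral_mono_on hIntL hIntT measurableSet_closedBall step3
  have step5 : ∫ w in B, (g w0 - g w)/2 ∂ν = (g w0 * V0 - I)/2 := by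
    rw [integral_div]
    congr 1
    rw [integral_sub (integrableOn_const (C := g w0) hBc.measure_lt_top.ne) hInt,
      setIntegral_const, smul_eq_mul, mul_comm, measureReal_def]
  have key : (g w0 * V0 - I)/2 ≤ (2:ℝ)^d * I := by
    calc (g w0 * V0 - I)/2 = ∫ w in B, (g w0 - g w)/2 ∂ν := step5.symm
    _ ≤ ∫ w in B, g (c + (2⁻¹:ℝ) • w) ∂ν := step4
    _ = (2:ℝ) ^ d * ∫ y in B', g y ∂ν := step2
    _ ≤ (2:ℝ) ^ d * I := by
        refine mul_le_mul_of_nonneg_left step1 (le_of_lt h2d)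
  have hpow : (2:ℝ) ^ (d + 2) = 4 * 2 ^ d := by ring
  rw [div_le_iff₀ (by positivity), hpow]
  have hge1 : (1:ℝ) ≤ 2 ^ d := one_le_pow₀ one_le_two
  nlinarith [key, hI0, hge1]

section InfDist
variable {A : Type*} [NormedAddCommGroup A] [NormedSpace ℝ A]

lemma infDist_subadd (W : Submodule ℝ A) (a b : A) :
    infDist (a + b) (W : Set A) ≤ infDist a (W : Set A) + infDist b (W : Set A) := by
  refine le_of_forall_pos_le_add fun ε hε => ?_
  have hne : (W : Set A).Nonempty := ⟨0, W.zero_mem⟩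
  obtain ⟨u, hu, hdu⟩ := (infDist_lt_iff hne).1
    (show infDist a (W : Set A) < infDist a (W : Set A) + ε/2 by linarith)
  obtain ⟨v, hv, hdv⟩ := (infDist_lt_iff hne).1
    (show infDist b (W : Set A) < infDist b (W : Set A) + ε/2 by linarith)
  have h1 : infDist (a + b) (W : Set A) ≤ dist (a + b) (u + v) :=
    infDist_le_dist_of_mem (W.add_mem hu hv)
  have h2 : dist (a + b) (u + v) ≤ dist a u + dist b v := dist_add_add_le _ _ _ _
  linarith

lemma infDist_smul_le (W : Submodule ℝ A) (r : ℝ) (a : A) :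
    infDist (r • a) (W : Set A) ≤ |r| * infDist a (W : Set A) := by
  rcases eq_or_ne r 0 with rfl | hr
  · simp [infDist_zero_of_mem W.zero_mem]
  refine le_of_forall_pos_le_add fun ε hε => ?_
  have hne : (W : Set A).Nonempty := ⟨0, W.zero_mem⟩
  have hrpos : 0 < |r| := abs_pos.2 hr
  obtain ⟨u, hu, hdu⟩ := (infDist_lt_iff hne).1
    (show infDist a (W : Set A) < infDist a (W : Set A) + ε/|r| by have := div_pos hε hrpos; linarith)
  have h1 : infDist (r • a) (W : Set A) ≤ dist (r • a) (r • u) :=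
    infDist_le_dist_of_mem (W.smul_mem r hu)
  have h2 : dist (r • a) (r • u) = |r| * dist a u := by
    rw [dist_smul₀, Real.norm_eq_abs]
  have h3 : |r| * dist a u < |r| * (infDist a (W : Set A) + ε/|r|) := by
    exact mul_lt_mul_of_pos_left hdu hrpos
  have h4 : |r| * (infDist a (W : Set A) + ε/|r|) = |r| * infDist a (W : Set A) + ε := by
    field_simp
  linarith

lemma infDist_smul_eq (W : Submodule ℝ A) (r : ℝ) (a : A) :
    infDist (r • a) (W : Set A) = |r| * infDist a (W : Set A) := by
  rcases eq_or_ne r 0 with rfl | hr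
  · simp [infDist_zero_of_mem W.zero_mem]
  refine le_antisymm (infDist_smul_le W r a) ?_
  have h := infDist_smul_le W r⁻¹ (r • a)
  rw [inv_smul_smul₀ hr, abs_inv] at h
  have hrpos : 0 < |r| := abs_pos.2 hr
  calc |r| * infDist a (W : Set A) ≤ |r| * (|r|⁻¹ * infDist (r • a) (W : Set A)) :=
        mul_le_mul_of_nonneg_left h (abs_nonneg r)
  _ = infDist (r • a) (W : Set A) := by field_simp

lemma infDist_neg_eq (W : Submodule ℝ A) (a : A) :
    infDist (-a) (W : Set A) = infDist a (W : Set A) := by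
  have := infDist_smul_eq W (-1) a
  simpa using this

end InfDist

section Proj

variable {E : Type} [NormedAddCommGroup E] [NormedSpace ℝ E] [FiniteDimensional ℝ E]

lemma one_le_norm_of_idem {P : E →L[ℝ] E} (hP : ∀ v, P (P v) = P v) (hP0 : P ≠ 0) :
    1 ≤ ‖P‖ := by
  have : ∃ v, P v ≠ 0 := by
    by_contra h
    push_neg at h
    exact hP0 (by ext v; simpa using h v)
  obtain ⟨v, hv⟩ := this
  have h1 : ‖P (P v)‖ ≤ ‖P‖ * ‖P v‖ := P.le_opNorm (P v)
  rw [hP v] at h1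
  have h2 : 0 < ‖P v‖ := norm_pos_iff.2 hv
  nlinarith

lemma exists_bounded_proj :
    ∃ C : ℝ, 1 ≤ C ∧ ∀ W : Submodule ℝ E, ∃ P : E →L[ℝ] E,
      (∀ v ∈ W, P v = v) ∧ (∀ v, P v ∈ W) ∧ ‖P‖ ≤ C := by
  set e := toEuclidean (E := E) with he
  set C : ℝ := max 1 (‖(e.symm : EuclideanSpace ℝ (Fin (Module.finrank ℝ E)) →L[ℝ] E)‖
      * ‖(e : E →L[ℝ] EuclideanSpace ℝ (Fin (Module.finrank ℝ E)))‖) with hC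
  refine ⟨C, le_max_left _ _, fun W => ?_⟩
  set W' : Submodule ℝ (EuclideanSpace ℝ (Fin (Module.finrank ℝ E))) :=
    W.map (e.toLinearEquiv : E →ₗ[ℝ] EuclideanSpace ℝ (Fin (Module.finrank ℝ E))) with hW'
  set P : E →L[ℝ] E :=
    ((e.symm : EuclideanSpace ℝ (Fin (Module.finrank ℝ E)) →L[ℝ] E).comp
      ((W'.subtypeL.comp (Submodule.orthogonalProjectionOnto W')).comp
        (e : E →L[ℝ] EuclideanSpace ℝ (Fin (Module.finrank ℝ E))))) with hP
  have hmem : ∀ v, P v ∈ W := by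
    intro v
    have h1 : ((Submodule.orthogonalProjectionOnto W' (e v) : W') : EuclideanSpace ℝ (Fin (Module.finrank ℝ E))) ∈ W' :=
      (Submodule.orthogonalProjectionOnto W' (e v)).2
    obtain ⟨w, hw, hw'⟩ := h1
    have : P v = w := by
      simp only [hP, ContinuousLinearMap.coe_comp', Function.comp_apply,
        ContinuousLinearEquiv.coe_coe, Submodule.coe_subtypeL', Submodule.coe_subtype]
      rw [← hw']
      exact e.symm_apply_apply w
    rw [this]; exact hw
  have hfix : ∀ v ∈ W, P v = v := by
    intro v hv
    have h1 : e v ∈ W' := Submodule.mem_map_of_mem hv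
    have h2 : ((Submodule.orthogonalProjectionOnto W' (e v) : W') : EuclideanSpace ℝ (Fin (Module.finrank ℝ E)))
        = e v := by
      have := Submodule.orthogonalProjectionOnto_mem_subspace_eq_self (K := W') ⟨e v, h1⟩
      rw [this]
    simp only [hP, ContinuousLinearMap.coe_comp', Function.comp_apply,
      ContinuousLinearEquiv.coe_coe, Submodule.coe_subtypeL', Submodule.coe_subtype]
    rw [h2]
    exact e.symm_apply_apply v
  refine ⟨P, hfix, hmem, ?_⟩
  refine ContinuousLinearMap.opNorm_le_bound _ (le_trans zero_le_one (le_max_left _ _)) fun v => ?_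
  have h1 : ‖P v‖ ≤ ‖(e.symm : EuclideanSpace ℝ (Fin (Module.finrank ℝ E)) →L[ℝ] E)‖
      * ‖((Submodule.orthogonalProjectionOnto W' (e v) : W') : EuclideanSpace ℝ (Fin (Module.finrank ℝ E)))‖ := by
    simp only [hP, ContinuousLinearMap.coe_comp', Function.comp_apply,
      ContinuousLinearEquiv.coe_coe, Submodule.coe_subtypeL', Submodule.coe_subtype]
    exact (e.symm : EuclideanSpace ℝ (Fin (Module.finrank ℝ E)) →L[ℝ] E).le_opNorm _
  have h2 : ‖((Submodule.orthogonalProjectionOnto W' (e v) : W') : EuclideanSpace ℝ (Fin (Module.finrank ℝ E)))‖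
      ≤ ‖e v‖ := by
    have := (Submodule.orthogonalProjectionOnto W').le_opNorm (e v)
    have hle := Submodule.orthogonalProjectionOnto_norm_le W'
    have hnn : (0:ℝ) ≤ ‖e v‖ := norm_nonneg _
    calc ‖((Submodule.orthogonalProjectionOnto W' (e v) : W') : EuclideanSpace ℝ (Fin (Module.finrank ℝ E)))‖
        = ‖Submodule.orthogonalProjectionOnto W' (e v)‖ := rfl
    _ ≤ ‖(Submodule.orthogonalProjectionOnto W')‖ * ‖e v‖ := this
    _ ≤ 1 * ‖e v‖ := by nlinarith
    _ = ‖e v‖ := one_mul _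
  have h3 : ‖e v‖ ≤ ‖(e : E →L[ℝ] EuclideanSpace ℝ (Fin (Module.finrank ℝ E)))‖ * ‖v‖ :=
    (e : E →L[ℝ] EuclideanSpace ℝ (Fin (Module.finrank ℝ E))).le_opNorm v
  have hnn1 : (0:ℝ) ≤ ‖(e.symm : EuclideanSpace ℝ (Fin (Module.finrank ℝ E)) →L[ℝ] E)‖ :=
    norm_nonneg _
  have hnn2 : (0:ℝ) ≤ ‖(e : E →L[ℝ] EuclideanSpace ℝ (Fin (Module.finrank ℝ E)))‖ := norm_nonneg _
  have hCge : ‖(e.symm : EuclideanSpace ℝ (Fin (Module.finrank ℝ E)) →L[ℝ] E)‖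
      * ‖(e : E →L[ℝ] EuclideanSpace ℝ (Fin (Module.finrank ℝ E)))‖ ≤ C := le_max_right _ _
  have hvnn : (0:ℝ) ≤ ‖v‖ := norm_nonneg _
  nlinarith

lemma infDist_range_le {P Q : E →L[ℝ] E} (hQ : ∀ v, Q (Q v) = Q v) (v : E) :
    Metric.infDist v (Set.range P) ≤ Metric.infDist v (Set.range Q) + 2 * ‖v‖ * ‖P - Q‖ := by
  refine le_of_forall_pos_le_add fun ε hε => ?_
  have hQne : (Set.range (Q : E → E)).Nonempty := ⟨Q 0, ⟨0, rfl⟩⟩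
  set ε' : ℝ := ε / (1 + ‖P - Q‖) with hε'
  have hd : 0 < 1 + ‖P - Q‖ := by positivity
  have hε'pos : 0 < ε' := div_pos hε hd
  obtain ⟨q, hq, hdq⟩ := (infDist_lt_iff hQne).1
    (show infDist v (Set.range (Q : E → E)) < infDist v (Set.range (Q : E → E)) + ε' by linarith)
  have hqQ : Q q = q := by obtain ⟨z, rfl⟩ := hq; exact hQ z
  have h0 : infDist v (Set.range (Q : E → E)) ≤ ‖v‖ := by
    have : (0:E) ∈ Set.range (Q : E → E) := ⟨0, map_zero Q⟩
    simpa [dist_zero_right] using infDist_le_dist_of_mem this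
  have h1 : infDist v (Set.range (P : E → E)) ≤ dist v (P q) :=
    infDist_le_dist_of_mem ⟨q, rfl⟩
  have h2 : dist v (P q) ≤ dist v q + ‖q - P q‖ := by
    calc dist v (P q) ≤ dist v q + dist q (P q) := dist_triangle _ _ _
    _ = dist v q + ‖q - P q‖ := by rw [dist_eq_norm q (P q)]
  have h3 : ‖q - P q‖ ≤ ‖P - Q‖ * ‖q‖ := by
    have : q - P q = (Q - P) q := by rw [ContinuousLinearMap.sub_apply, hqQ]
    rw [this]
    calc ‖(Q - P) q‖ ≤ ‖Q - P‖ * ‖q‖ := (Q - P).le_opNorm q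
    _ = ‖P - Q‖ * ‖q‖ := by rw [norm_sub_rev]
  have h4 : ‖q‖ ≤ ‖v‖ + dist v q := by
    calc ‖q‖ = dist q 0 := (dist_zero_right q).symm
    _ ≤ dist q v + dist v 0 := dist_triangle _ _ _
    _ = ‖v‖ + dist v q := by rw [dist_comm q v, dist_zero_right]; ring
  have h5 : dist v q ≤ ‖v‖ + ε' := by
    have := hdq; linarith
  have hPQnn : (0:ℝ) ≤ ‖P - Q‖ := norm_nonneg _
  have hεeq : ε' * (1 + ‖P - Q‖) = ε := by
    rw [hε']; field_simp
  nlinarith [infDist_nonneg (s := Set.range (Q : E → E)) (x := v), norm_nonneg v]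

section Main
variable {E : Type} [NormedRing E] [NormedAlgebra ℝ E] [FiniteDimensional ℝ E]

lemma exists_unif_pos
    (hsimple : ∀ I : Submodule ℝ E, (∀ a : E, ∀ x ∈ I, a * x ∈ I ∧ x * a ∈ I) → I = ⊥ ∨ I = ⊤)
    (k : ℕ) (hk0 : 0 < k) (hk : k < Module.finrank ℝ E) :
    ∃ δ : ℝ, 0 < δ ∧ ∀ W : Submodule ℝ E, Module.finrank ℝ W = k →
      ∃ x ∈ closedBall (0:E) 1, ∃ w : W, w ∈ closedBall (0:W) 1 ∧
        δ ≤ infDist (x * (w:E)) (W : Set E) + infDist ((w:E) * x) (W : Set E) := by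
  obtain ⟨C, hC1, hproj⟩ := exists_bounded_proj (E := E)
  have hC0 : (0:ℝ) < C := lt_of_lt_of_le one_pos hC1
  set D : Set (E × E) := closedBall (0:E) 1 ×ˢ closedBall (0:E) 1 with hD
  set Ψ : (E →L[ℝ] E) → E × E → ℝ := fun P p =>
    infDist (p.1 * P p.2) (Set.range ⇑P) + infDist (P p.2 * p.1) (Set.range ⇑P) with hΨ
  set PP : Set (E →L[ℝ] E) := {P | (∀ v, P (P v) = P v) ∧ ‖P‖ ≤ C ∧ 1 ≤ ‖P‖ ∧
    1 ≤ ‖(1 : E →L[ℝ] E) - P‖} with hPP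
  set Φ : (E →L[ℝ] E) → ℝ := fun P => sSup (Ψ P '' D) with hΦ
  have hD0 : ((0:E), (0:E)) ∈ D := by
    rw [hD]; exact Set.mem_prod.2 ⟨mem_closedBall_self zero_le_one, mem_closedBall_self zero_le_one⟩
  have hΨnn : ∀ P p, 0 ≤ Ψ P p := fun P p => add_nonneg infDist_nonneg infDist_nonneg
  have hrange0 : ∀ P : E →L[ℝ] E, (0:E) ∈ Set.range ⇑P := fun P => ⟨0, map_zero P⟩
  have hinf_le_norm : ∀ (P : E →L[ℝ] E) (v : E), infDist v (Set.range ⇑P) ≤ ‖v‖ := fun P v => by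
    simpa [dist_zero_right] using infDist_le_dist_of_mem (hrange0 P)
  have hΨ00 : ∀ P : E →L[ℝ] E, Ψ P ((0:E), (0:E)) = 0 := by
    intro P
    simp only [hΨ, map_zero, zero_mul, mul_zero]
    rw [infDist_zero_of_mem (hrange0 P)]
    ring
  have hmulbd : ∀ (P : E →L[ℝ] E), ‖P‖ ≤ C → ∀ p : E × E, p ∈ D →
      ‖p.1 * P p.2‖ ≤ C ∧ ‖P p.2 * p.1‖ ≤ C := by
    intro P hPC p hp
    obtain ⟨hx, hu⟩ := Set.mem_prod.1 hp
    rw [mem_closedBall, dist_zero_right] at hx hu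
    have h1 : ‖P p.2‖ ≤ C := by
      have := P.le_opNorm p.2
      nlinarith [norm_nonneg (P p.2), norm_nonneg P]
    constructor
    · calc ‖p.1 * P p.2‖ ≤ ‖p.1‖ * ‖P p.2‖ := norm_mul_le _ _
      _ ≤ C := by nlinarith [norm_nonneg p.1, norm_nonneg (P p.2)]
    · calc ‖P p.2 * p.1‖ ≤ ‖P p.2‖ * ‖p.1‖ := norm_mul_le _ _
      _ ≤ C := by nlinarith [norm_nonneg p.1, norm_nonneg (P p.2)]
  have hΨbdd : ∀ P : E →L[ℝ] E, ‖P‖ ≤ C → ∀ p ∈ D, Ψ P p ≤ 2 * C := by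
    intro P hPC p hp
    obtain ⟨hb1, hb2⟩ := hmulbd P hPC p hp
    have i1 := le_trans (hinf_le_norm P (p.1 * P p.2)) hb1
    have i2 := le_trans (hinf_le_norm P (P p.2 * p.1)) hb2
    simp only [hΨ]
    linarith
  have hbddAbove : ∀ P : E →L[ℝ] E, ‖P‖ ≤ C → BddAbove (Ψ P '' D) := by
    intro P hPC
    refine ⟨2 * C, ?_⟩
    rintro y ⟨p, hp, rfl⟩
    exact hΨbdd P hPC p hp
  have hImne : ∀ P : E →L[ℝ] E, (Ψ P '' D).Nonempty := fun P => ⟨_, Set.mem_image_of_mem _ hD0⟩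
  have hΨLip : ∀ P ∈ PP, ∀ Q ∈ PP, ∀ p ∈ D, Ψ P p ≤ Ψ Q p + (2 + 4 * C) * ‖P - Q‖ := by
    intro P hP Q hQ p hp
    obtain ⟨hx, hu⟩ := Set.mem_prod.1 hp
    rw [mem_closedBall, dist_zero_right] at hx hu
    have hQidem := hQ.1
    have hPQnn : (0:ℝ) ≤ ‖P - Q‖ := norm_nonneg _
    have happ : ‖P p.2 - Q p.2‖ ≤ ‖P - Q‖ := by
      have := (P - Q).le_opNorm p.2
      simp only [ContinuousLinearMap.sub_apply] at this
      nlinarith [norm_nonneg (P p.2 - Q p.2)]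
    have hdist1 : dist (p.1 * P p.2) (p.1 * Q p.2) ≤ ‖P - Q‖ := by
      rw [dist_eq_norm, ← mul_sub]
      calc ‖p.1 * (P p.2 - Q p.2)‖ ≤ ‖p.1‖ * ‖P p.2 - Q p.2‖ := norm_mul_le _ _
      _ ≤ ‖P - Q‖ := by nlinarith [norm_nonneg p.1, norm_nonneg (P p.2 - Q p.2)]
    have hdist2 : dist (P p.2 * p.1) (Q p.2 * p.1) ≤ ‖P - Q‖ := by
      rw [dist_eq_norm, ← sub_mul]
      calc ‖(P p.2 - Q p.2) * p.1‖ ≤ ‖P p.2 - Q p.2‖ * ‖p.1‖ := norm_mul_le _ _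
      _ ≤ ‖P - Q‖ := by nlinarith [norm_nonneg p.1, norm_nonneg (P p.2 - Q p.2)]
    have e1 : infDist (p.1 * P p.2) (Set.range ⇑P)
        ≤ infDist (p.1 * Q p.2) (Set.range ⇑P) + ‖P - Q‖ :=
      le_trans infDist_le_infDist_add_dist (by linarith)
    have e2 : infDist (P p.2 * p.1) (Set.range ⇑P)
        ≤ infDist (Q p.2 * p.1) (Set.range ⇑P) + ‖P - Q‖ :=
      le_trans infDist_le_infDist_add_dist (by linarith)
    have hb1 : ‖p.1 * Q p.2‖ ≤ C := (hmulbd Q hQ.2.1 p hp).1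
    have hb2 : ‖Q p.2 * p.1‖ ≤ C := (hmulbd Q hQ.2.1 p hp).2
    have e3 : infDist (p.1 * Q p.2) (Set.range ⇑P)
        ≤ infDist (p.1 * Q p.2) (Set.range ⇑Q) + 2 * C * ‖P - Q‖ := by
      have := infDist_range_le (P := P) (Q := Q) hQidem (p.1 * Q p.2)
      nlinarith [norm_nonneg (p.1 * Q p.2)]
    have e4 : infDist (Q p.2 * p.1) (Set.range ⇑P)
        ≤ infDist (Q p.2 * p.1) (Set.range ⇑Q) + 2 * C * ‖P - Q‖ := by
      have := infDist_range_le (P := P) (Q := Q) hQidem (Q p.2 * p.1)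
      nlinarith [norm_nonneg (Q p.2 * p.1)]
    simp only [hΨ]
    linarith
  have hΦLip : ∀ P ∈ PP, ∀ Q ∈ PP, Φ P ≤ Φ Q + (2 + 4 * C) * ‖P - Q‖ := by
    intro P hP Q hQ
    refine csSup_le (hImne P) ?_
    rintro y ⟨p, hp, rfl⟩
    have h1 := hΨLip P hP Q hQ p hp
    have h2 : Ψ Q p ≤ Φ Q := le_csSup (hbddAbove Q hQ.2.1) (Set.mem_image_of_mem _ hp)
    linarith
  have hΦcont : ContinuousOn Φ PP := by
    have hKnn : (0:ℝ) ≤ 2 + 4 * C := by linarith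
    refine LipschitzOnWith.continuousOn (K := (2 + 4 * C).toNNReal) ?_
    refine LipschitzOnWith.of_dist_le_mul ?_
    intro P hP Q hQ
    rw [Real.coe_toNNReal _ hKnn, Real.dist_eq, dist_eq_norm, abs_le]
    have h1 := hΦLip P hP Q hQ
    have h2 := hΦLip Q hQ P hP
    rw [norm_sub_rev] at h2
    constructor <;> linarith
  have hPcl : IsClosed PP := by
    have h1 : IsClosed {P : E →L[ℝ] E | ∀ v, P (P v) = P v} := by
      have heq : {P : E →L[ℝ] E | ∀ v, P (P v) = P v} = ⋂ v, {P | P (P v) = P v} := by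
        ext P; simp
      rw [heq]
      refine isClosed_iInter fun v => isClosed_eq ?_ ?_
      · exact isBoundedBilinearMap_apply.continuous.comp
          (continuous_id.prodMk (ContinuousLinearMap.apply ℝ E v).continuous)
      · exact (ContinuousLinearMap.apply ℝ E v).continuous
    have h2 : IsClosed {P : E →L[ℝ] E | ‖P‖ ≤ C} := isClosed_le continuous_norm continuous_const
    have h3 : IsClosed {P : E →L[ℝ] E | 1 ≤ ‖P‖} := isClosed_le continuous_const continuous_norm
    have h4 : IsClosed {P : E →L[ℝ] E | 1 ≤ ‖(1 : E →L[ℝ] E) - P‖} :=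
      isClosed_le continuous_const ((continuous_const.sub continuous_id).norm)
    have heq : PP = {P : E →L[ℝ] E | ∀ v, P (P v) = P v} ∩ ({P | ‖P‖ ≤ C} ∩
        ({P | 1 ≤ ‖P‖} ∩ {P | 1 ≤ ‖(1 : E →L[ℝ] E) - P‖})) := by
      rw [hPP]; ext P
      simp only [Set.mem_setOf_eq, Set.mem_inter_iff]
    rw [heq]
    exact h1.inter (h2.inter (h3.inter h4))
  have hPcomp : IsCompact PP := by
    have hsub : PP ⊆ closedBall 0 C := by
      intro P hP
      rw [mem_closedBall_zero_iff]
      exact hP.2.1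
    exact (isCompact_closedBall (0 : E →L[ℝ] E) C).of_isClosed_subset hPcl hsub
  have hpos : ∀ P ∈ PP, 0 < Φ P := by
    intro P hP
    by_contra hc
    push_neg at hc
    have hzero : ∀ p ∈ D, Ψ P p = 0 := fun p hp =>
      le_antisymm (le_trans (le_csSup (hbddAbove P hP.2.1) (Set.mem_image_of_mem _ hp)) hc)
        (hΨnn P p)
    set J : Submodule ℝ E := LinearMap.range (P : E →ₗ[ℝ] E) with hJ
    have hJset : (J : Set E) = Set.range ⇑P := LinearMap.coe_range (P : E →ₗ[ℝ] E)
    have hJclosed : IsClosed (J : Set E) := Submodule.closed_of_finiteDimensional J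
    have hJne : (J : Set E).Nonempty := ⟨0, J.zero_mem⟩
    have hmemJ : ∀ v : E, infDist v (J : Set E) = 0 → v ∈ J := fun v hv =>
      (hJclosed.mem_iff_infDist_zero hJne).2 hv
    have hideal : ∀ a : E, ∀ y ∈ J, a * y ∈ J ∧ y * a ∈ J := by
      intro a y hy
      obtain ⟨z, hz⟩ := LinearMap.mem_range.1 hy
      change P z = y at hz
      set s : ℝ := (‖a‖ + 1)⁻¹ with hs
      set t : ℝ := (‖z‖ + 1)⁻¹ with ht
      have hspos : 0 < s := by rw [hs]; positivity
      have htpos : 0 < t := by rw [ht]; positivity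
      have hx : s • a ∈ closedBall (0:E) 1 := by
        rw [mem_closedBall, dist_zero_right, norm_smul, Real.norm_eq_abs, abs_of_pos hspos, hs,
          inv_mul_le_iff₀ (by positivity)]
        linarith [norm_nonneg a]
      have hu : t • z ∈ closedBall (0:E) 1 := by
        rw [mem_closedBall, dist_zero_right, norm_smul, Real.norm_eq_abs, abs_of_pos htpos, ht,
          inv_mul_le_iff₀ (by positivity)]
        linarith [norm_nonneg z]
      have hpD : (s • a, t • z) ∈ D := by rw [hD]; exact Set.mem_prod.2 ⟨hx, hu⟩
      have hzero' := hzero _ hpD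
      simp only [hΨ] at hzero'
      have c1 : infDist ((s • a) * P (t • z)) (Set.range ⇑P) = 0 := by
        have := infDist_nonneg (s := Set.range ⇑P) (x := (s • a) * P (t • z))
        have := infDist_nonneg (s := Set.range ⇑P) (x := P (t • z) * (s • a))
        linarith
      have c2 : infDist (P (t • z) * (s • a)) (Set.range ⇑P) = 0 := by
        have := infDist_nonneg (s := Set.range ⇑P) (x := (s • a) * P (t • z))
        have := infDist_nonneg (s := Set.range ⇑P) (x := P (t • z) * (s • a))
        linarith
      have heq1 : (s • a) * P (t • z) = (s * t) • (a * y) := by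
        rw [_root_.map_smul, hz, smul_mul_assoc, mul_smul_comm, smul_smul]
      have heq2 : P (t • z) * (s • a) = (s * t) • (y * a) := by
        rw [_root_.map_smul, hz, smul_mul_assoc, mul_smul_comm, smul_smul, mul_comm t s]
      rw [heq1, ← hJset, infDist_smul_eq] at c1
      rw [heq2, ← hJset, infDist_smul_eq] at c2
      have hstpos : 0 < |s * t| := by rw [abs_of_pos (by positivity)]; positivity
      have hc1 : infDist (a * y) (J : Set E) = 0 := by
        rcases mul_eq_zero.1 c1 with h | h
        exacts [absurd h (ne_of_gt hstpos), h]
      have hc2 : infDist (y * a) (J : Set E) = 0 := by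
        rcases mul_eq_zero.1 c2 with h | h
        exacts [absurd h (ne_of_gt hstpos), h]
      exact ⟨hmemJ _ hc1, hmemJ _ hc2⟩
    rcases hsimple J hideal with hbot | htop
    · have hPz : P = 0 := by
        ext v
        have hv : P v ∈ J := LinearMap.mem_range_self (P : E →ₗ[ℝ] E) v
        rw [hbot] at hv
        simpa using hv
      have := hP.2.2.1
      rw [hPz] at this
      norm_num at this
    · have hPone : (1 : E →L[ℝ] E) - P = 0 := by
        ext v
        have hv : v ∈ J := htop ▸ Submodule.mem_top
        obtain ⟨z, hz⟩ := LinearMap.mem_range.1 hv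
        have hPv : P v = v := by rw [← hz]; exact hP.1 z
        simp [ContinuousLinearMap.sub_apply, hPv]
      have := hP.2.2.2
      rw [hPone] at this
      norm_num at this
  have hPW : ∀ W : Submodule ℝ E, Module.finrank ℝ W = k →
      ∃ P ∈ PP, (∀ v ∈ W, P v = v) ∧ (∀ v, P v ∈ W) := by
    intro W hW
    obtain ⟨P, hfix, hmem, hnorm⟩ := hproj W
    have hidem : ∀ v, P (P v) = P v := fun v => hfix _ (hmem v)
    have hWbot : W ≠ ⊥ := by
      intro h
      rw [h, finrank_bot] at hW
      omega
    obtain ⟨w0, hw0W, hw0⟩ := Submodule.exists_mem_ne_zero_of_ne_bot hWbot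
    have hP0 : P ≠ 0 := by
      intro h
      apply hw0
      have : P w0 = w0 := hfix w0 hw0W
      rw [h] at this
      simpa using this.symm
    have h1P : 1 ≤ ‖P‖ := one_le_norm_of_idem hidem hP0
    have hWtop : W ≠ ⊤ := by
      intro h
      rw [h, finrank_top] at hW
      omega
    obtain ⟨v0, hv0⟩ : ∃ v, v ∉ W := by
      by_contra h
      push_neg at h
      exact hWtop (Submodule.eq_top_iff'.2 h)
    have hidem2 : ∀ v, ((1 : E →L[ℝ] E) - P) (((1 : E →L[ℝ] E) - P) v)
        = ((1 : E →L[ℝ] E) - P) v := by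
      intro v
      simp only [ContinuousLinearMap.sub_apply, ContinuousLinearMap.one_apply, map_sub, hidem v]
      abel
    have hQ0 : (1 : E →L[ℝ] E) - P ≠ 0 := by
      intro h
      have h1 := ContinuousLinearMap.ext_iff.1 h v0
      simp only [ContinuousLinearMap.sub_apply, ContinuousLinearMap.one_apply,
        ContinuousLinearMap.zero_apply, sub_eq_zero] at h1
      exact hv0 (h1 ▸ hmem v0)
    have h1Q : 1 ≤ ‖(1 : E →L[ℝ] E) - P‖ := one_le_norm_of_idem hidem2 hQ0
    exact ⟨P, ⟨hidem, hnorm, h1P, h1Q⟩, hfix, hmem⟩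
  by_cases hPne : PP.Nonempty
  · obtain ⟨P0, hP0mem, hmin⟩ := hPcomp.exists_isMinOn hPne hΦcont
    have hδ0 : 0 < Φ P0 := hpos P0 hP0mem
    refine ⟨C⁻¹ * (Φ P0 / 2), by positivity, fun W hW => ?_⟩
    obtain ⟨P, hPmem, hfix, hmem⟩ := hPW W hW
    have hrange : Set.range ⇑P = (W : Set E) := by
      ext v
      constructor
      · rintro ⟨z, rfl⟩; exact hmem z
      · intro hv; exact ⟨v, hfix v hv⟩
    have hlt : Φ P0 / 2 < Φ P := lt_of_lt_of_le (by linarith) (hmin hPmem)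
    obtain ⟨y, hy, hylt⟩ := exists_lt_of_lt_csSup (hImne P) hlt
    obtain ⟨p, hpD, rfl⟩ := hy
    obtain ⟨hx, hu⟩ := Set.mem_prod.1 hpD
    set wE : E := P p.2 with hwE
    have hwEW : wE ∈ W := hmem p.2
    have hwEnorm : ‖wE‖ ≤ C := by
      have h1 := P.le_opNorm p.2
      rw [mem_closedBall, dist_zero_right] at hu
      have h2 : ‖P‖ ≤ C := hPmem.2.1
      nlinarith [norm_nonneg (P p.2), norm_nonneg P]
    set w : W := ⟨C⁻¹ • wE, W.smul_mem _ hwEW⟩ with hw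
    have hwball : w ∈ closedBall (0:W) 1 := by
      rw [mem_closedBall, dist_zero_right]
      have hnw : ‖w‖ = ‖C⁻¹ • wE‖ := rfl
      rw [hnw, norm_smul, Real.norm_eq_abs, abs_of_pos (inv_pos.2 hC0),
        inv_mul_le_iff₀ hC0]
      linarith
    refine ⟨p.1, hx, w, hwball, ?_⟩
    have hcoe : (w : E) = C⁻¹ • wE := rfl
    have e1 : infDist (p.1 * (w : E)) (W : Set E) = C⁻¹ * infDist (p.1 * wE) (W : Set E) := by
      rw [hcoe, mul_smul_comm, infDist_smul_eq, abs_of_pos (inv_pos.2 hC0)]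
    have e2 : infDist ((w : E) * p.1) (W : Set E) = C⁻¹ * infDist (wE * p.1) (W : Set E) := by
      rw [hcoe, smul_mul_assoc, infDist_smul_eq, abs_of_pos (inv_pos.2 hC0)]
    have hΨval : Ψ P p = infDist (p.1 * wE) (W : Set E) + infDist (wE * p.1) (W : Set E) := by
      simp only [hΨ, ← hwE, hrange]
    have hge : Φ P0 / 2 ≤ infDist (p.1 * wE) (W : Set E) + infDist (wE * p.1) (W : Set E) := by
      rw [← hΨval]
      exact le_of_lt hylt
    rw [e1, e2, ← mul_add]
    exact mul_le_mul_of_nonneg_left hge (by positivity)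
  · refine ⟨1, one_pos, fun W hW => ?_⟩
    obtain ⟨P, hPm, _⟩ := hPW W hW
    exact absurd ⟨P, hPm⟩ hPne

end Main

/-- On a finite-dimensional simple real algebra `E`, the function on the Grassmannian of
`k`-dimensional subspaces `W ↦ ∫∫_{B_E(0,1) × B_W(0,1)} (d(xw,W) + d(wx,W)) dx dw`
never vanishes, and has a uniform positive lower bound (with the Haar measure on each `W`
normalized by `ν_W(B_W(0,1)) = 1`). -/
theorem stmt13 {E : Type} [NormedRing E] [NormedAlgebra ℝ E] [FiniteDimensional ℝ E]
    [MeasurableSpace E] [BorelSpace E] [Nontrivial E]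
    (hsimple : ∀ I : Submodule ℝ E, (∀ a : E, ∀ x ∈ I, a * x ∈ I ∧ x * a ∈ I) → I = ⊥ ∨ I = ⊤)
    (k : ℕ) (hk0 : 0 < k) (hk : k < Module.finrank ℝ E)
    (volE : Measure E) [volE.IsAddHaarMeasure] :
    ∃ m : ℝ, 0 < m ∧
      ∀ W : Submodule ℝ E, Module.finrank ℝ W = k →
      ∀ νW : Measure W, νW.IsAddHaarMeasure → νW (Metric.closedBall 0 1) = 1 →
        m ≤ ∫ x in Metric.closedBall (0 : E) 1,
              (∫ w in Metric.closedBall (0 : W) 1,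
                (Metric.infDist (x * (w : E)) (W : Set E) +
                  Metric.infDist ((w : E) * x) (W : Set E)) ∂νW) ∂volE := by
  obtain ⟨δ, hδ0, hδ⟩ := exists_unif_pos hsimple k hk0 hk
  set n := Module.finrank ℝ E with hn
  have hVball : 0 < volE (closedBall (0:E) 1) :=
    measure_closedBall_pos volE 0 one_pos
  have hVfin : volE (closedBall (0:E) 1) ≠ ⊤ := (isCompact_closedBall _ _).measure_lt_top.ne
  set V0 : ℝ := (volE (closedBall (0:E) 1)).toReal with hV0
  have hV0pos : 0 < V0 := ENNReal.toReal_pos (ne_of_gt hVball) hVfin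
  refine ⟨δ * V0 / (2 ^ (k + 2) * 2 ^ (n + 2)), by positivity, ?_⟩
  intro W hW νW hνW hν1
  haveI := hνW
  obtain ⟨x, hx, w, hwB, hxw⟩ := hδ W hW
  have hν1R : (νW (closedBall 0 1)).toReal = 1 := by rw [hν1]; exact ENNReal.toReal_one
  -- the inner integrand as a function of (x', w')
  set G : E → W → ℝ := fun x' w' =>
    infDist (x' * (w' : E)) (W : Set E) + infDist ((w' : E) * x') (W : Set E) with hG
  have hGcont : ∀ x', Continuous (G x') := by
    intro x'
    apply Continuous.add
    · exact (continuous_infDist_pt _).comp (continuous_const.mul continuous_subtype_val)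
    · exact (continuous_infDist_pt _).comp (continuous_subtype_val.mul continuous_const)
  have hGnn : ∀ x' w', 0 ≤ G x' w' := fun x' w' => add_nonneg infDist_nonneg infDist_nonneg
  have hGle : ∀ (x' : E) (w' : W), w' ∈ closedBall (0:W) 1 → G x' w' ≤ 2 * ‖x'‖ := by
    intro x' w' hw'
    rw [mem_closedBall, dist_zero_right] at hw'
    have hcoe : ‖(w' : E)‖ = ‖w'‖ := rfl
    have h1 : infDist (x' * (w' : E)) (W : Set E) ≤ ‖x' * (w' : E)‖ := by
      simpa [dist_zero_right] using infDist_le_dist_of_mem (W.zero_mem)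
    have h2 : infDist ((w' : E) * x') (W : Set E) ≤ ‖(w' : E) * x'‖ := by
      simpa [dist_zero_right] using infDist_le_dist_of_mem (W.zero_mem)
    have h3 : ‖x' * (w' : E)‖ ≤ ‖x'‖ * ‖(w' : E)‖ := norm_mul_le _ _
    have h4 : ‖(w' : E) * x'‖ ≤ ‖(w' : E)‖ * ‖x'‖ := norm_mul_le _ _
    simp only [hG]
    nlinarith [norm_nonneg x', norm_nonneg (w' : E), hcoe ▸ hw']
  have hGint : ∀ x', IntegrableOn (G x') (closedBall (0:W) 1) νW :=
    fun x' => (hGcont x').continuousOn.integrableOn_compact (isCompact_closedBall _ _)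
  -- inner integral
  set F : E → ℝ := fun x' => ∫ w' in closedBall (0:W) 1, G x' w' ∂νW with hF
  have hFnn : ∀ x', 0 ≤ F x' :=
    fun x' => setIntegral_nonneg measurableSet_closedBall fun w' _ => hGnn x' w'
  have hFle : ∀ x', F x' ≤ 2 * ‖x'‖ := by
    intro x'
    have h1 : F x' ≤ ∫ _ in closedBall (0:W) 1, 2 * ‖x'‖ ∂νW := by
      refine setIntegral_mono_on (hGint x') (integrableOn_const ?_)
        measurableSet_closedBall (fun w' hw' => hGle x' w' hw')
      exact (isCompact_closedBall _ _).measure_lt_top.ne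
    rw [setIntegral_const, measureReal_def, hν1R, one_smul] at h1
    exact h1
  have hFsub : ∀ a b : E, F (a + b) ≤ F a + F b := by
    intro a b
    have hpt : ∀ w' ∈ closedBall (0:W) 1, G (a + b) w' ≤ G a w' + G b w' := by
      intro w' _
      simp only [hG]
      have e1 : (a + b) * (w' : E) = a * (w' : E) + b * (w' : E) := add_mul _ _ _
      have e2 : (w' : E) * (a + b) = (w' : E) * a + (w' : E) * b := mul_add _ _ _
      have i1 := infDist_subadd W (a * (w' : E)) (b * (w' : E))
      have i2 := infDist_subadd W ((w' : E) * a) ((w' : E) * b)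
      rw [e1, e2]
      linarith
    calc F (a + b) ≤ ∫ w' in closedBall (0:W) 1, (G a w' + G b w') ∂νW :=
          setIntegral_mono_on (hGint (a + b)) ((hGint a).add (hGint b))
            measurableSet_closedBall hpt
    _ = F a + F b := integral_add (hGint a) (hGint b)
  have hFlip : LipschitzWith 2 F := by
    refine LipschitzWith.of_dist_le_mul fun a b => ?_
    have hcoe2 : ((2:NNReal):ℝ) = 2 := by norm_num
    rw [Real.dist_eq, dist_eq_norm, hcoe2]
    have h1 : F a ≤ F b + 2 * ‖a - b‖ := by
      have := hFsub b (a - b)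
      rw [add_sub_cancel] at this
      linarith [hFle (a - b)]
    have h2 : F b ≤ F a + 2 * ‖a - b‖ := by
      have := hFsub a (b - a)
      rw [add_sub_cancel] at this
      have := hFle (b - a)
      rw [norm_sub_rev] at this
      linarith
    rw [abs_le]
    constructor <;> [linarith; linarith]
  have hFint : IntegrableOn F (closedBall (0:E) 1) volE :=
    hFlip.continuous.continuousOn.integrableOn_compact (isCompact_closedBall _ _)
  -- h := G · w  as function of x'
  set h : E → ℝ := fun x' => G x' w with hh
  have hhcont : Continuous h := by
    apply Continuous.add
    · exact (continuous_infDist_pt _).comp (continuous_mul_right _)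
    · exact (continuous_infDist_pt _).comp (continuous_mul_left _)
  have hhnn : ∀ x', 0 ≤ h x' := fun x' => hGnn x' w
  have hhsub : ∀ a b : E, h (a + b) ≤ h a + h b := by
    intro a b
    simp only [hh, hG]
    have e1 : (a + b) * (w : E) = a * (w : E) + b * (w : E) := add_mul _ _ _
    have e2 : (w : E) * (a + b) = (w : E) * a + (w : E) * b := mul_add _ _ _
    have i1 := infDist_subadd W (a * (w : E)) (b * (w : E))
    have i2 := infDist_subadd W ((w : E) * a) ((w : E) * b)
    rw [e1, e2]
    linarith
  have hhsm : ∀ (r : ℝ) (x' : E), h (r • x') = |r| * h x' := by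
    intro r x'
    simp only [hh, hG]
    rw [smul_mul_assoc, mul_smul_comm, infDist_smul_eq, infDist_smul_eq]
    ring
  have hhint : IntegrableOn h (closedBall (0:E) 1) volE :=
    hhcont.continuousOn.integrableOn_compact (isCompact_closedBall _ _)
  -- Step A : pointwise comparison F ≥ h / 2^(k+2) using avg on W
  have stepA : ∀ x' : E, h x' / 2 ^ (k + 2) ≤ F x' := by
    intro x'
    have hWcont : Continuous (G x') := hGcont x'
    have hWadd : ∀ a b : W, G x' (a + b) ≤ G x' a + G x' b := by
      intro a b
      simp only [hG]
      have e1 : x' * ((a + b : W) : E) = x' * (a : E) + x' * (b : E) := by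
        rw [Submodule.coe_add, mul_add]
      have e2 : ((a + b : W) : E) * x' = (a : E) * x' + (b : E) * x' := by
        rw [Submodule.coe_add, add_mul]
      have i1 := infDist_subadd W (x' * (a : E)) (x' * (b : E))
      have i2 := infDist_subadd W ((a : E) * x') ((b : E) * x')
      rw [e1, e2]
      linarith
    have hWsm : ∀ (r : ℝ) (v : W), G x' (r • v) = |r| * G x' v := by
      intro r v
      simp only [hG]
      have e1 : ((r • v : W) : E) = r • (v : E) := rfl
      rw [e1, mul_smul_comm, smul_mul_assoc, infDist_smul_eq, infDist_smul_eq]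
      ring
    have := avg_seminorm νW (G x') hWcont (hGnn x') hWadd hWsm w hwB
    rw [hν1R, mul_one, hW] at this
    exact this
  -- integrate Step A over the unit ball of E
  have stepB : (∫ x' in closedBall (0:E) 1, h x' ∂volE) / 2 ^ (k + 2)
      ≤ ∫ x' in closedBall (0:E) 1, F x' ∂volE := by
    rw [div_eq_mul_inv, ← integral_mul_const]
    refine setIntegral_mono_on (hhint.mul_const _) hFint measurableSet_closedBall ?_
    intro x' _
    have := stepA x'
    rw [div_eq_mul_inv] at this
    exact this
  -- avg on E applied to h with center x
  have stepC : h x * V0 / 2 ^ (n + 2) ≤ ∫ x' in closedBall (0:E) 1, h x' ∂volE := by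
    have := avg_seminorm volE h hhcont hhnn hhsub hhsm x hx
    rw [← hV0, ← hn] at this
    exact this
  have hhx : δ ≤ h x := hxw
  -- final arithmetic
  have hfinal : δ * V0 / (2 ^ (k + 2) * 2 ^ (n + 2))
      ≤ (h x * V0 / 2 ^ (n + 2)) / 2 ^ (k + 2) := by
    rw [div_div]
    have h1 : δ * V0 ≤ h x * V0 := mul_le_mul_of_nonneg_right hhx (le_of_lt hV0pos)
    have h2 : (0:ℝ) < 2 ^ (n + 2) * 2 ^ (k + 2) := by positivity
    rw [div_le_div_iff₀ (by positivity) (by positivity)]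
    calc δ * V0 * (2 ^ (n + 2) * 2 ^ (k + 2)) ≤ h x * V0 * (2 ^ (n + 2) * 2 ^ (k + 2)) :=
      mul_le_mul_of_nonneg_right h1 (le_of_lt h2)
    _ = h x * V0 * (2 ^ (k + 2) * 2 ^ (n + 2)) := by ring
  calc δ * V0 / (2 ^ (k + 2) * 2 ^ (n + 2)) ≤ (h x * V0 / 2 ^ (n + 2)) / 2 ^ (k + 2) := hfinal
  _ ≤ (∫ x' in closedBall (0:E) 1, h x' ∂volE) / 2 ^ (k + 2) := by
      exact (div_le_div_iff_of_pos_right (by positivity : (0:ℝ) < 2 ^ (k + 2))).2 stepC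
  _ ≤ ∫ x' in closedBall (0:E) 1, F x' ∂volE := stepB
end Proj
end
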